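/- arXiv:2407.21585 — 6 statements merged into one kernel-verified Lean document; each statement's English description precedes it below -/
import Mathlib

section
/- Every slice of the closed unit ball of the projective tensor product X ⊗̂π Y contains an elementary tensor x ⊗ y with x in the closed unit ball of X and y in the closed unit ball of Y. -/
open NormedSpace Metric Set MeasureTheory

noncomputable section

/-- The ballSlice of the closed unit ball of `X` determined by the functional `f` and `α`:
`S(B_X, f, α) = { x ∈ B_X : f x > sup f(B_X) - α }`. -/
def ballSlice {X : Type*} [NormedAddCommGroup X] [NormedSpace ℝ X]
    (f : StrongDual ℝ X) (α : ℝ) : Set X :=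
  {x | ‖x‖ ≤ 1 ∧ sSup ((fun z => f z) '' Metric.closedBall (0 : X) 1) - α < f x}

/-- The Daugavet property (geometric characterisation). -/
def HasDaugavet (X : Type*) [NormedAddCommGroup X] [NormedSpace ℝ X] : Prop :=
  ∀ x : X, ‖x‖ = 1 → ∀ ε : ℝ, 0 < ε → ∀ (f : StrongDual ℝ X) (α : ℝ), 0 < α →
    ∃ y ∈ ballSlice f α, 2 - ε < ‖x + y‖

/-- The weak operator Daugavet property (WODP). -/
def HasWODP (X : Type*) [NormedAddCommGroup X] [NormedSpace ℝ X] : Prop :=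
  ∀ (n : ℕ) (xs : Fin n → X), (∀ i, ‖xs i‖ = 1) → ∀ ε : ℝ, 0 < ε →
    ∀ (f : StrongDual ℝ X) (α : ℝ), 0 < α → ∀ x' : X, ‖x'‖ ≤ 1 →
      ∃ x ∈ ballSlice f α, ∃ T : X →L[ℝ] X, ‖T‖ ≤ 1 + ε ∧
        (∀ i, ‖T (xs i) - xs i‖ < ε) ∧ ‖T x - x'‖ < ε

/-- `U` is open in the weak topology of `X`. -/
def IsWeaklyOpen {X : Type*} [NormedAddCommGroup X] [NormedSpace ℝ X] (U : Set X) : Prop :=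
  ∀ x ∈ U, ∃ (n : ℕ) (f : Fin n → StrongDual ℝ X) (δ : ℝ), 0 < δ ∧
    {y : X | ∀ i, |(f i) (y - x)| < δ} ⊆ U

/-- `W` is a relatively weakly open subset of the closed unit ball of `X`. -/
def IsRelWeakOpenBall {X : Type*} [NormedAddCommGroup X] [NormedSpace ℝ X] (W : Set X) : Prop :=
  ∃ U : Set X, IsWeaklyOpen U ∧ W = U ∩ Metric.closedBall (0 : X) 1

/-- The diametral diameter two property (DD2P). -/
def HasDD2P (X : Type*) [NormedAddCommGroup X] [NormedSpace ℝ X] : Prop :=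
  ∀ W : Set X, IsRelWeakOpenBall W → W.Nonempty →
    ∀ z ∈ W, ‖z‖ = 1 → ∀ ε : ℝ, 0 < ε → ∃ w ∈ W, 2 - ε < ‖w - z‖

/-- The diameter two property (D2P). -/
def HasD2P (X : Type*) [NormedAddCommGroup X] [NormedSpace ℝ X] : Prop :=
  ∀ W : Set X, IsRelWeakOpenBall W → W.Nonempty → Metric.diam W = 2

/-- `Z` realises the projective tensor product `X ⊗̂π Y`: it carries a bilinear map with dense
span of elementary tensors, and finite sums of elementary tensors carry the projective norm. -/
structure IsProjTensor (X Y Z : Type*) [NormedAddCommGroup X] [NormedSpace ℝ X]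
    [NormedAddCommGroup Y] [NormedSpace ℝ Y] [NormedAddCommGroup Z] [NormedSpace ℝ Z] where
  e : X →ₗ[ℝ] Y →ₗ[ℝ] Z
  dense : Dense (Submodule.span ℝ {z : Z | ∃ x y, z = e x y} : Set Z)
  norm_eq : ∀ (n : ℕ) (x : Fin n → X) (y : Fin n → Y),
    ‖∑ i, e (x i) (y i)‖ =
      sInf {r : ℝ | ∃ (m : ℕ) (a : Fin m → X) (b : Fin m → Y),
        (∑ i, e (a i) (b i)) = ∑ i, e (x i) (y i) ∧ r = ∑ i, ‖a i‖ * ‖b i‖}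

/-- `Z` realises the injective tensor product `X ⊗̂ε Y`: it carries a bilinear map with dense
span of elementary tensors, and finite sums of elementary tensors carry the injective norm. -/
structure IsInjTensor (X Y Z : Type*) [NormedAddCommGroup X] [NormedSpace ℝ X]
    [NormedAddCommGroup Y] [NormedSpace ℝ Y] [NormedAddCommGroup Z] [NormedSpace ℝ Z] where
  e : X →ₗ[ℝ] Y →ₗ[ℝ] Z
  dense : Dense (Submodule.span ℝ {z : Z | ∃ x y, z = e x y} : Set Z)
  norm_eq : ∀ (n : ℕ) (x : Fin n → X) (y : Fin n → Y),
    ‖∑ i, e (x i) (y i)‖ =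
      sSup {r : ℝ | ∃ (f : StrongDual ℝ X) (g : StrongDual ℝ Y), ‖f‖ ≤ 1 ∧ ‖g‖ ≤ 1 ∧
        r = |∑ i, f (x i) * g (y i)|}

section Aux

variable {X Y Z : Type*} [NormedAddCommGroup X] [NormedSpace ℝ X]
    [NormedAddCommGroup Y] [NormedSpace ℝ Y] [NormedAddCommGroup Z] [NormedSpace ℝ Z]

lemma IsProjTensor.norm_e_le (h : IsProjTensor X Y Z) (x : X) (y : Y) :
    ‖h.e x y‖ ≤ ‖x‖ * ‖y‖ := by
  have key := h.norm_eq 1 (fun _ => x) (fun _ => y)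
  simp only [Fin.sum_univ_one] at key
  rw [key]
  apply csInf_le
  · refine ⟨0, fun r hr => ?_⟩
    obtain ⟨m, a, b, -, rfl⟩ := hr
    exact Finset.sum_nonneg fun i _ => mul_nonneg (norm_nonneg _) (norm_nonneg _)
  · exact ⟨1, fun _ => x, fun _ => y, by simp [Fin.sum_univ_one], by simp [Fin.sum_univ_one]⟩

lemma IsProjTensor.rep (h : IsProjTensor X Y Z) {z : Z}
    (hz : z ∈ Submodule.span ℝ {z : Z | ∃ x y, z = h.e x y}) :
    ∃ (n : ℕ) (a : Fin n → X) (b : Fin n → Y), z = ∑ i, h.e (a i) (b i) := by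
  induction hz using Submodule.span_induction with
  | mem z hz =>
    obtain ⟨x, y, rfl⟩ := hz
    exact ⟨1, fun _ => x, fun _ => y, by simp [Fin.sum_univ_one]⟩
  | zero => exact ⟨0, Fin.elim0, Fin.elim0, by simp⟩
  | add z w _ _ hz hw =>
    obtain ⟨n, a, b, rfl⟩ := hz
    obtain ⟨m, c, d, rfl⟩ := hw
    refine ⟨n + m, Fin.append a c, Fin.append b d, ?_⟩
    rw [Fin.sum_univ_add]
    simp [Fin.append_left, Fin.append_right]
  | smul r z _ hz =>
    obtain ⟨n, a, b, rfl⟩ := hz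
    refine ⟨n, fun i => r • a i, b, ?_⟩
    rw [Finset.smul_sum]
    congr 1
    ext i
    simp

end Aux

/-- Every slice of the unit ball of `X ⊗̂π Y` contains an elementary tensor `x ⊗ y`
with `x ∈ B_X` and `y ∈ B_Y`. -/
theorem stmt0 {X Y Z : Type*} [NormedAddCommGroup X] [NormedSpace ℝ X] [CompleteSpace X]
    [NormedAddCommGroup Y] [NormedSpace ℝ Y] [CompleteSpace Y]
    [NormedAddCommGroup Z] [NormedSpace ℝ Z] [CompleteSpace Z]
    (h : IsProjTensor X Y Z) (f : StrongDual ℝ Z) (α : ℝ) (hα : 0 < α) :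
    ∃ (x : X) (y : Y), ‖x‖ ≤ 1 ∧ ‖y‖ ≤ 1 ∧ h.e x y ∈ ballSlice f α := by
  classical
  set M := sSup ((fun z => f z) '' Metric.closedBall (0 : Z) 1) with hM
  by_contra hcon
  push_neg at hcon
  -- every elementary tensor of unit-ball elements has small functional value
  have hsmall : ∀ x : X, ∀ y : Y, ‖x‖ ≤ 1 → ‖y‖ ≤ 1 → f (h.e x y) ≤ M - α := by
    intro x y hx hy
    have hnorm : ‖h.e x y‖ ≤ 1 :=
      (h.norm_e_le x y).trans (by nlinarith [norm_nonneg x, norm_nonneg y])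
    have := hcon x y hx hy
    unfold ballSlice at this
    simp only [Set.mem_setOf_eq, not_and, not_lt] at this
    exact this hnorm
  set c := M - α with hc
  have hc0 : 0 ≤ c := by
    have := hsmall 0 0 (by simp) (by simp)
    simpa using this
  -- scale-invariant version
  have hA : ∀ x : X, ∀ y : Y, f (h.e x y) ≤ c * (‖x‖ * ‖y‖) := by
    intro x y
    rcases eq_or_ne x 0 with rfl | hx
    · simp
    rcases eq_or_ne y 0 with rfl | hy
    · simp
    have hxn : (0:ℝ) < ‖x‖ := norm_pos_iff.mpr hx
    have hyn : (0:ℝ) < ‖y‖ := norm_pos_iff.mpr hy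
    have := hsmall (‖x‖⁻¹ • x) (‖y‖⁻¹ • y)
      (by rw [norm_smul]; simp [abs_of_pos hxn, inv_mul_cancel₀ hxn.ne']) 
      (by rw [norm_smul]; simp [abs_of_pos hyn, inv_mul_cancel₀ hyn.ne'])
    have heq : h.e (‖x‖⁻¹ • x) (‖y‖⁻¹ • y) = (‖x‖⁻¹ * ‖y‖⁻¹) • h.e x y := by
      simp only [LinearMap.map_smul, LinearMap.smul_apply, smul_smul, mul_comm]
    rw [heq, _root_.map_smul] at this
    have : ‖x‖⁻¹ * ‖y‖⁻¹ * f (h.e x y) ≤ c := this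
    rw [show c * (‖x‖ * ‖y‖) = c * ‖x‖ * ‖y‖ by ring]
    calc f (h.e x y) = (‖x‖⁻¹ * ‖y‖⁻¹ * f (h.e x y)) * (‖x‖ * ‖y‖) := by
          field_simp
      _ ≤ c * (‖x‖ * ‖y‖) := by
          apply mul_le_mul_of_nonneg_right this (by positivity)
      _ = c * ‖x‖ * ‖y‖ := by ring
  -- f bounded by c times norm on the span
  have hB : ∀ z ∈ Submodule.span ℝ {z : Z | ∃ x y, z = h.e x y}, f z ≤ c * ‖z‖ := by
    intro z hz
    obtain ⟨n, a, b, rfl⟩ := h.rep hz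
    rw [h.norm_eq n a b]
    set S := {r : ℝ | ∃ (m : ℕ) (aa : Fin m → X) (bb : Fin m → Y),
        (∑ i, h.e (aa i) (bb i)) = ∑ i, h.e (a i) (b i) ∧ r = ∑ i, ‖aa i‖ * ‖bb i‖} with hS
    have hbound : ∀ r ∈ S, f (∑ i, h.e (a i) (b i)) ≤ c * r := by
      rintro r ⟨m, aa, bb, heq, rfl⟩
      rw [← heq, map_sum, Finset.mul_sum]
      exact Finset.sum_le_sum fun i _ => hA (aa i) (bb i)
    have hSne : S.Nonempty := ⟨∑ i, ‖a i‖ * ‖b i‖, n, a, b, rfl, rfl⟩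
    rcases eq_or_lt_of_le hc0 with hc0' | hc0'
    · obtain ⟨r, hr⟩ := hSne
      have := hbound r hr
      rw [← hc0'] at this ⊢
      simpa using this
    · rw [show c * sInf S = c * sInf S by rfl]
      have : f (∑ i, h.e (a i) (b i)) / c ≤ sInf S := by
        apply le_csInf hSne
        intro r hr
        rw [div_le_iff₀ hc0']
        calc f (∑ i, h.e (a i) (b i)) ≤ c * r := hbound r hr
          _ = r * c := by ring
      calc f (∑ i, h.e (a i) (b i)) = c * (f (∑ i, h.e (a i) (b i)) / c) := by
            field_simp
        _ ≤ c * sInf S := by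
            apply mul_le_mul_of_nonneg_left this (le_of_lt hc0')
  -- extend to all of Z by density and continuity
  have hC : ∀ z : Z, f z ≤ c * ‖z‖ := by
    intro z
    have hclosed : IsClosed {z : Z | f z ≤ c * ‖z‖} :=
      isClosed_le f.continuous (continuous_const.mul continuous_norm)
    have hsub : (Submodule.span ℝ {z : Z | ∃ x y, z = h.e x y} : Set Z)
        ⊆ {z : Z | f z ≤ c * ‖z‖} := fun w hw => hB w hw
    have := hclosed.closure_subset_iff.mpr hsub
    rw [h.dense.closure_eq] at this
    exact this (Set.mem_univ z)
  -- contradiction with the sup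
  have hMle : M ≤ c := by
    apply csSup_le
    · exact ⟨f 0, 0, by simp⟩
    · rintro r ⟨z, hzb, rfl⟩
      have hz1 : ‖z‖ ≤ 1 := by simpa using Metric.mem_closedBall.mp hzb
      calc f z ≤ c * ‖z‖ := hC z
        _ ≤ c * 1 := mul_le_mul_of_nonneg_left hz1 hc0
        _ = c := mul_one c
  rw [hc] at hMle
  linarith
end
end

section
/- If a Banach space X has the Daugavet property, then every nonempty relatively weakly open subset of the closed unit ball of X has diameter exactly two. -/
open NormedSpace Metric Set MeasureTheory

noncomputable section

lemma extend_sum_eq {ι : Type*} [Fintype ι] {β : Type*} [Fintype β] {M : Type*}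
    [AddCommMonoid M] (e : ι ↪ β) (F : β → M)
    (h0 : ∀ j, (¬ ∃ i, e i = j) → F j = 0) : ∑ j, F j = ∑ i, F (e i) := by
  rw [← Finset.sum_map Finset.univ e F]
  symm
  apply Finset.sum_subset (Finset.subset_univ _)
  intro j _ hj
  apply h0
  rintro ⟨i, hi⟩
  exact hj (Finset.mem_map.2 ⟨i, Finset.mem_univ i, hi⟩)

lemma myIsCompact_convexHull {E : Type*} [NormedAddCommGroup E] [NormedSpace ℝ E]
    [FiniteDimensional ℝ E] {S : Set E} (hS : IsCompact S) :
    IsCompact (convexHull ℝ S) := by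
  rcases S.eq_empty_or_nonempty with rfl | ⟨s₀, hs₀⟩
  · simpa [convexHull_empty] using isCompact_empty
  set d := Module.finrank ℝ E + 1 with hd
  set Δ : Set (Fin d → ℝ) := {w | (∀ i, 0 ≤ w i) ∧ ∑ i, w i = 1} with hΔdef
  have hΔc : IsClosed Δ := by
    have h1 : IsClosed {w : Fin d → ℝ | ∀ i, 0 ≤ w i} := by
      have : {w : Fin d → ℝ | ∀ i, 0 ≤ w i} = ⋂ i, {w | 0 ≤ w i} := by ext; simp
      rw [this]
      exact isClosed_iInter fun i => isClosed_le continuous_const (continuous_apply i)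
    have h2 : IsClosed {w : Fin d → ℝ | ∑ i, w i = 1} :=
      isClosed_eq (continuous_finset_sum _ fun i _ => continuous_apply i) continuous_const
    have : Δ = {w : Fin d → ℝ | ∀ i, 0 ≤ w i} ∩ {w | ∑ i, w i = 1} := by
      rw [hΔdef]; ext w; simp [Set.mem_setOf_eq, Set.mem_inter_iff]
    rw [this]; exact h1.inter h2
  have hΔb : Bornology.IsBounded Δ := by
    apply (Metric.isBounded_closedBall (x := (0 : Fin d → ℝ)) (r := 1)).subset
    intro w hw
    rw [Metric.mem_closedBall, dist_zero_right]
    refine (pi_norm_le_iff_of_nonneg zero_le_one).2 fun i => ?_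
    rw [Real.norm_eq_abs, abs_of_nonneg (hw.1 i)]
    calc w i ≤ ∑ j, w j := Finset.single_le_sum (fun j _ => hw.1 j) (Finset.mem_univ i)
    _ = 1 := hw.2
  have hΔ : IsCompact Δ := Metric.isCompact_of_isClosed_isBounded hΔc hΔb
  have hP : IsCompact (Set.univ.pi fun _ : Fin d => S) := isCompact_univ_pi fun _ => hS
  have hD : IsCompact (Δ ×ˢ (Set.univ.pi fun _ : Fin d => S)) := hΔ.prod hP
  have hcont : Continuous (fun p : (Fin d → ℝ) × (Fin d → E) => ∑ i, p.1 i • p.2 i) := by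
    refine continuous_finset_sum _ fun i _ => ?_
    exact ((continuous_apply i).comp continuous_fst).smul ((continuous_apply i).comp continuous_snd)
  have himg : convexHull ℝ S =
      (fun p : (Fin d → ℝ) × (Fin d → E) => ∑ i, p.1 i • p.2 i) ''
        (Δ ×ˢ (Set.univ.pi fun _ : Fin d => S)) := by
    apply Subset.antisymm
    · intro x hx
      obtain ⟨ι, hfin, z, w, hrange, haff, hwpos, hwsum, hzsum⟩ :=
        eq_pos_convex_span_of_mem_convexHull hx
      have hcard : Fintype.card ι ≤ d := by
        calc Fintype.card ι ≤ Module.finrank ℝ (vectorSpan ℝ (Set.range z)) + 1 :=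
              haff.card_le_finrank_succ
        _ ≤ d := by
              rw [hd]
              exact Nat.add_le_add_right (Submodule.finrank_le _) 1
      obtain ⟨e⟩ : Nonempty (ι ↪ Fin d) :=
        Function.Embedding.nonempty_of_card_le (by simpa using hcard)
      set w' : Fin d → ℝ := Function.extend e w 0 with hw'
      set z' : Fin d → E := Function.extend e z (fun _ => s₀) with hz'
      have hw'zero : ∀ j, (¬ ∃ i, e i = j) → w' j = 0 := by
        intro j hj; rw [hw', Function.extend_apply' _ _ _ hj]; rfl
      have hwe : ∀ i, w' (e i) = w i := fun i => by rw [hw', e.injective.extend_apply]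
      have hze : ∀ i, z' (e i) = z i := fun i => by rw [hz', e.injective.extend_apply]
      have hw'nn : ∀ j, 0 ≤ w' j := by
        intro j
        by_cases hj : ∃ i, e i = j
        · obtain ⟨i, rfl⟩ := hj
          rw [hw', e.injective.extend_apply]
          exact (hwpos i).le
        · rw [hw'zero j hj]
      have hz'mem : ∀ j, z' j ∈ S := by
        intro j
        by_cases hj : ∃ i, e i = j
        · obtain ⟨i, rfl⟩ := hj
          rw [hz', e.injective.extend_apply]
          exact hrange (Set.mem_range_self i)
        · rw [hz', Function.extend_apply' _ _ _ hj]
          exact hs₀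
      have hw'sum : ∑ j, w' j = 1 := by
        have := extend_sum_eq e w' (fun j hj => hw'zero j hj)
        rw [this]
        simp only [hwe]
        exact hwsum
      have hz'sum : ∑ j, w' j • z' j = x := by
        have := extend_sum_eq e (fun j => w' j • z' j)
          (fun j hj => by show w' j • z' j = (0:E); rw [hw'zero j hj, zero_smul])
        rw [this]
        simp only [hwe, hze]
        exact hzsum
      exact ⟨(w', z'), ⟨⟨hw'nn, hw'sum⟩, fun j _ => hz'mem j⟩, hz'sum⟩
    · rintro x ⟨⟨w, z⟩, ⟨⟨hw0, hw1⟩, hz⟩, rfl⟩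
      exact mem_convexHull_of_exists_fintype w z hw0 hw1
        (fun i => hz i (Set.mem_univ i)) rfl
  rw [himg]; exact hD.image hcont



/-- sup of a continuous linear functional over a set equals sup over its closure -/
lemma csSup_image_closure {E : Type*} [NormedAddCommGroup E] [NormedSpace ℝ E]
    (φ : E →L[ℝ] ℝ) {A : Set E} (hA : A.Nonempty) (hb : BddAbove (φ '' closure A)) :
    sSup (φ '' closure A) = sSup (φ '' A) := by
  have hbA : BddAbove (φ '' A) := hb.mono (Set.image_mono subset_closure)
  apply le_antisymm
  · apply csSup_le ((hA.mono subset_closure).image φ)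
    rintro x ⟨k, hk, rfl⟩
    have h1 : φ k ∈ closure (φ '' A) :=
      (image_closure_subset_closure_image φ.continuous) (Set.mem_image_of_mem φ hk)
    have h2 : closure (φ '' A) ⊆ Set.Iic (sSup (φ '' A)) :=
      closure_minimal (fun y hy => le_csSup hbA hy) isClosed_Iic
    exact h2 h1
  · exact csSup_le_csSup hb (hA.image φ) (Set.image_mono subset_closure)

/-- at an extreme point of a compact convex set in finite dimensions,
slices form a neighbourhood basis -/
lemma denting {E : Type*} [NormedAddCommGroup E] [NormedSpace ℝ E] [FiniteDimensional ℝ E]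
    {K : Set E} (hKc : IsCompact K) (hKconv : Convex ℝ K) {p : E}
    (hp : p ∈ K.extremePoints ℝ) {η : ℝ} (hη : 0 < η) :
    ∃ φ : E →L[ℝ] ℝ, ∃ α : ℝ, 0 < α ∧
      ∀ k ∈ K, sSup (φ '' K) - α < φ k → ‖k - p‖ < η := by
  classical
  set S : Set E := K \ Metric.ball p η with hSdef
  have hScomp : IsCompact S :=
    hKc.of_isClosed_subset (hKc.isClosed.sdiff Metric.isOpen_ball) Set.diff_subset
  set C : Set E := convexHull ℝ S with hCdef
  have hCcomp : IsCompact C := myIsCompact_convexHull hScomp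
  have hpC : p ∉ C := by
    intro hpc
    have hsub : S ⊆ K \ {p} := by
      apply Set.diff_subset_diff_right
      simp only [Set.singleton_subset_iff]
      exact Metric.mem_ball_self hη
    have h1 : p ∈ K \ convexHull ℝ (K \ {p}) :=
      (hKconv.mem_extremePoints_iff_mem_diff_convexHull_diff).1 hp
    exact h1.2 (convexHull_mono hsub hpc)
  obtain ⟨f, u, hfu, hfb⟩ :=
    geometric_hahn_banach_point_closed (convex_convexHull ℝ S) hCcomp.isClosed hpC
  refine ⟨-f, -f p - (-u), by linarith, fun k hk hslice => ?_⟩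
  have hkK : (-f) k ≤ sSup ((-f) '' K) :=
    le_csSup ((hKc.image (-f).continuous).bddAbove) (Set.mem_image_of_mem _ hk)
  have hpK : (-f) p ≤ sSup ((-f) '' K) :=
    le_csSup ((hKc.image (-f).continuous).bddAbove) (Set.mem_image_of_mem _ hp.1)
  -- slice condition gives (-f) k > -u, i.e. f k < u, so k ∉ C
  have hfk : f k < u := by
    have : sSup ((-f) '' K) - ((-f) p - (-u)) < (-f) k := hslice
    have hfp : (-f) p = -(f p) := rfl
    have hfk' : (-f) k = -(f k) := rfl
    -- sSup ≥ (-f) p, so (-f) k > sSup - (-f) p + (-u) ≥ -u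
    have : -u < (-f) k := by linarith
    rw [hfk'] at this; linarith
  by_contra hdist
  apply absurd (hfb k (subset_convexHull ℝ S ⟨hk, ?_⟩)) (by linarith)
  intro hball
  rw [Metric.mem_ball, dist_eq_norm] at hball
  exact hdist hball



lemma daugavet_chain {X : Type*} [NormedAddCommGroup X] [NormedSpace ℝ X]
    (h : HasDaugavet X) (m : ℕ) :
    ∀ (g : Fin m → StrongDual ℝ X) (α : Fin m → ℝ), (∀ j, 0 < α j) →
    ∀ (l : Fin m → ℝ), (∀ j, 0 ≤ l j) → ∀ (η C : ℝ), 0 < η →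
    ∀ v : X, ‖v‖ + ∑ j, l j ≤ C → (1 + C) * m * η < ‖v‖ →
    ∃ y : Fin m → X, (∀ j, y j ∈ ballSlice (g j) (α j)) ∧
      ‖v‖ + ∑ j, l j - (1 + C) * m * η ≤ ‖v + ∑ j, l j • y j‖ := by
  induction m with
  | zero =>
    intro g α hα l hl η C hη v hC hlt
    exact ⟨Fin.elim0, fun j => j.elim0, by simp⟩
  | succ m ih =>
    intro g α hα l hl η C hη v hC hlt
    have hsumnn : (0:ℝ) ≤ ∑ j, l j := Finset.sum_nonneg fun j _ => hl j
    have hC0 : 0 ≤ C := le_trans (by positivity) hC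
    have hvpos : 0 < ‖v‖ := lt_of_le_of_lt (by positivity) hlt
    have hvne : v ≠ 0 := norm_pos_iff.mp hvpos
    set u : X := ‖v‖⁻¹ • v with hu
    have hunorm : ‖u‖ = 1 := by
      rw [hu, norm_smul, norm_inv, norm_norm, inv_mul_cancel₀ (ne_of_gt hvpos)]
    set η' : ℝ := min η 1 with hη'
    have hη'pos : 0 < η' := lt_min hη one_pos
    obtain ⟨y0, hy0slice, hy0⟩ := h u hunorm η' hη'pos (g 0) (α 0) (hα 0)
    have hy0norm : ‖y0‖ ≤ 1 := hy0slice.1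
    have hzpos : (0:ℝ) < ‖u + y0‖ := lt_of_lt_of_le (by
      have : η' ≤ 1 := min_le_right _ _
      linarith) hy0.le
    obtain ⟨f, hf1, hfz⟩ := exists_dual_vector ℝ (u + y0) (fun h0 => by simp [h0] at hzpos)
    have hfz' : f (u + y0) = ‖u + y0‖ := by exact_mod_cast hfz
    have hfle : ∀ w : X, f w ≤ ‖w‖ := by
      intro w
      calc f w ≤ ‖f w‖ := le_abs_self _
      _ ≤ ‖f‖ * ‖w‖ := f.le_opNorm w
      _ = ‖w‖ := by rw [hf1, one_mul]
    have hfy0 : 1 - η' ≤ f y0 := by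
      have h1 : f u ≤ 1 := le_trans (hfle u) (le_of_eq hunorm)
      have h2 : 2 - η' < f u + f y0 := by
        rw [← map_add]; rw [hfz']; exact hy0
      linarith
    have hfu : 1 - η' ≤ f u := by
      have h1 : f y0 ≤ 1 := le_trans (hfle y0) hy0norm
      have h2 : 2 - η' < f u + f y0 := by
        rw [← map_add]; rw [hfz']; exact hy0
      linarith
    have hfv : ‖v‖ * (1 - η') ≤ f v := by
      have hvu : v = ‖v‖ • u := by
        rw [hu, smul_smul, mul_inv_cancel₀ (ne_of_gt hvpos), one_smul]
      have hfveq : f v = ‖v‖ * f u := by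
        conv_lhs => rw [hvu]
        rw [_root_.map_smul, smul_eq_mul]
      rw [hfveq]
      exact mul_le_mul_of_nonneg_left hfu (le_of_lt hvpos)
    have hl0 : 0 ≤ l 0 := hl 0
    have hl0C : ‖v‖ + l 0 ≤ C := by
      have : l 0 ≤ ∑ j, l j :=
        Finset.single_le_sum (fun j _ => hl j) (Finset.mem_univ 0)
      linarith
    set v' : X := v + l 0 • y0 with hv'
    have hkey : ‖v‖ + l 0 - (1 + C) * η ≤ ‖v'‖ := by
      have h1 : f v' = f v + l 0 * f y0 := by
        rw [hv', map_add, _root_.map_smul, smul_eq_mul]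
      have h2 : l 0 * (1 - η') ≤ l 0 * f y0 :=
        mul_le_mul_of_nonneg_left hfy0 hl0
      have h3 : f v' ≤ ‖v'‖ := hfle v'
      have hη'η : η' ≤ η := min_le_left _ _
      have herr : (‖v‖ + l 0) * η' ≤ (1 + C) * η := by
        apply mul_le_mul (by linarith) hη'η (le_of_lt hη'pos) (by linarith)
      nlinarith
    have hub : ‖v'‖ ≤ ‖v‖ + l 0 := by
      calc ‖v'‖ ≤ ‖v‖ + ‖l 0 • y0‖ := norm_add_le _ _
      _ ≤ ‖v‖ + l 0 := by
          rw [norm_smul, Real.norm_eq_abs, abs_of_nonneg hl0]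
          nlinarith
    have hsum_split : ∑ j : Fin (m+1), l j = l 0 + ∑ j : Fin m, l j.succ :=
      Fin.sum_univ_succ l
    have hrec1 : ‖v'‖ + ∑ j : Fin m, l j.succ ≤ C := by
      have := hsum_split ▸ hC
      linarith
    have hrec2 : (1 + C) * m * η < ‖v'‖ := by
      have hcast : (1 + C) * (↑(m+1)) * η = (1 + C) * m * η + (1 + C) * η := by
        push_cast; ring
      rw [hcast] at hlt
      linarith
    obtain ⟨ys, hys, hbound⟩ := ih (fun j => g j.succ) (fun j => α j.succ)
      (fun j => hα j.succ) (fun j => l j.succ) (fun j => hl j.succ) η C hη v' hrec1 hrec2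
    refine ⟨Fin.cons y0 ys, ?_, ?_⟩
    · intro j
      refine Fin.cases ?_ ?_ j
      · rw [Fin.cons_zero]; exact hy0slice
      · intro i; rw [Fin.cons_succ]; exact hys i
    · have hsum2 : v + ∑ j : Fin (m+1), l j • (Fin.cons y0 ys : Fin (m+1) → X) j
          = v' + ∑ j : Fin m, l j.succ • ys j := by
        rw [Fin.sum_univ_succ]
        simp only [Fin.cons_zero, Fin.cons_succ]
        rw [hv']; abel
      rw [hsum2, hsum_split]
      have hcast : (1 + C) * (↑(m+1)) * η = (1 + C) * m * η + (1 + C) * η := by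
        push_cast; ring
      rw [hcast]
      linarith


lemma bourgain_slices {X : Type*} [NormedAddCommGroup X] [NormedSpace ℝ X] (W : Set X)
    (hW : IsRelWeakOpenBall W) (hne : W.Nonempty) :
    ∃ (m : ℕ) (g : Fin m → StrongDual ℝ X) (α : Fin m → ℝ) (l : Fin m → ℝ),
      (∀ j, 0 < α j) ∧ (∀ j, 0 ≤ l j) ∧ (∑ j, l j = 1) ∧
      ∀ y : Fin m → X, (∀ j, y j ∈ ballSlice (g j) (α j)) → (∑ j, l j • y j) ∈ W := by
  classical
  obtain ⟨U, hUopen, hWeq⟩ := hW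
  obtain ⟨u, huW⟩ := hne
  have huU : u ∈ U := (hWeq ▸ huW).1
  have huB : u ∈ Metric.closedBall (0:X) 1 := (hWeq ▸ huW).2
  obtain ⟨n, f, δ, hδ, hN⟩ := hUopen u huU
  set T : X →L[ℝ] (Fin n → ℝ) := ContinuousLinearMap.pi f with hT
  set A : Set (Fin n → ℝ) := ⇑T '' Metric.closedBall (0:X) 1 with hA
  set K : Set (Fin n → ℝ) := closure A with hK
  have hAne : A.Nonempty := ⟨T 0, Set.mem_image_of_mem _ (Metric.mem_closedBall_self zero_le_one)⟩
  have hAconv : Convex ℝ A := by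
    have := (convex_closedBall (0:X) 1).linear_image (T : X →ₗ[ℝ] (Fin n → ℝ))
    simpa using this
  have hAbdd : Bornology.IsBounded A := by
    apply (Metric.isBounded_closedBall (x := (0 : Fin n → ℝ)) (r := ‖T‖)).subset
    rintro x ⟨y, hy, rfl⟩
    rw [Metric.mem_closedBall, dist_zero_right]
    calc ‖T y‖ ≤ ‖T‖ * ‖y‖ := T.le_opNorm y
    _ ≤ ‖T‖ * 1 := by
        apply mul_le_mul_of_nonneg_left _ (norm_nonneg T)
        rwa [← mem_closedBall_zero_iff (a := y)]
    _ = ‖T‖ := mul_one _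
  have hKcomp : IsCompact K := Metric.isCompact_of_isClosed_isBounded isClosed_closure hAbdd.closure
  have hKconv : Convex ℝ K := hAconv.closure
  set q : Fin n → ℝ := T u with hq
  have hqK : q ∈ K := subset_closure (Set.mem_image_of_mem _ huB)
  have hKM : closure (convexHull ℝ (K.extremePoints ℝ)) = K :=
    closure_convexHull_extremePoints hKcomp hKconv
  have hq4 : 0 < δ/4 := by linarith
  obtain ⟨q', hq'mem, hq'dist⟩ := Metric.mem_closure_iff.1 (hKM ▸ hqK) (δ/4) hq4
  obtain ⟨ι, hfin, w, z, hw0, hw1, hzext, hzsum⟩ :=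
    mem_convexHull_iff_exists_fintype.1 hq'mem
  set m := Fintype.card ι with hm
  set idx : Fin m → ι := ⇑(Fintype.equivFin ι).symm with hidx
  have hδ2 : (0:ℝ) < δ/2 := by linarith
  have hdent : ∀ j : Fin m, ∃ φ : (Fin n → ℝ) →L[ℝ] ℝ, ∃ α : ℝ, 0 < α ∧
      ∀ k ∈ K, sSup (φ '' K) - α < φ k → ‖k - z (idx j)‖ < δ/2 :=
    fun j => denting hKcomp hKconv (hzext (idx j)) hδ2
  choose φ αs hαpos hloc using hdent
  refine ⟨m, fun j => (φ j).comp T, αs, fun j => w (idx j), hαpos, fun j => hw0 (idx j), ?_, ?_⟩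
  · rw [hidx]; exact (Equiv.sum_comp (Fintype.equivFin ι).symm w).trans hw1
  · intro y hy
    set p : X := ∑ j, w (idx j) • y j with hp
    have hynorm : ∀ j, ‖y j‖ ≤ 1 := fun j => (hy j).1
    have hpB : p ∈ Metric.closedBall (0:X) 1 := by
      rw [mem_closedBall_zero_iff]
      calc ‖p‖ ≤ ∑ j, ‖w (idx j) • y j‖ := norm_sum_le _ _
      _ ≤ ∑ j, w (idx j) := by
          apply Finset.sum_le_sum
          intro j _
          rw [norm_smul, Real.norm_eq_abs, abs_of_nonneg (hw0 (idx j))]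
          nlinarith [hynorm j, hw0 (idx j)]
      _ = 1 := (Equiv.sum_comp (Fintype.equivFin ι).symm w).trans hw1
    -- sup transfer
    have hsupeq : ∀ j, sSup ((fun v => ((φ j).comp T) v) '' Metric.closedBall (0:X) 1)
        = sSup ((φ j) '' K) := by
      intro j
      have himg : (fun v => ((φ j).comp T) v) '' Metric.closedBall (0:X) 1 = (φ j) '' A := by
        rw [hA, ← Set.image_comp]
        rfl
      rw [himg, hK]
      exact (csSup_image_closure (φ j) hAne ((hKcomp.image (φ j).continuous).bddAbove)).symm
    have hTy : ∀ j, ‖T (y j) - z (idx j)‖ < δ/2 := by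
      intro j
      have hTyK : T (y j) ∈ K := subset_closure
        (Set.mem_image_of_mem _ (mem_closedBall_zero_iff.2 (hynorm j)))
      apply hloc j (T (y j)) hTyK
      have := (hy j).2
      rw [hsupeq j] at this
      exact this
    -- q' as a combination
    have hq'sum : q' = ∑ j, w (idx j) • z (idx j) := by
      rw [← hzsum]
      exact (Equiv.sum_comp (Fintype.equivFin ι).symm (fun i => w i • z i)).symm
    have hTp : T p = ∑ j, w (idx j) • T (y j) := by
      rw [hp, map_sum]
      exact Finset.sum_congr rfl fun j _ => _root_.map_smul T _ _
    have hdecomp : T p - q = (∑ j, w (idx j) • (T (y j) - z (idx j))) + (q' - q) := by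
      rw [hTp, hq'sum]
      rw [Finset.sum_congr rfl fun j _ => smul_sub (w (idx j)) (T (y j)) (z (idx j))]
      rw [Finset.sum_sub_distrib]
      abel
    rw [hWeq]
    refine ⟨hN ?_, hpB⟩
    intro i
    have hcoord : f i (p - u) = (T p - q) i := by
      rw [map_sub, Pi.sub_apply, hq]
      rw [show (T p) i = f i p from rfl, show (T u) i = f i u from rfl]
    rw [hcoord, hdecomp, Pi.add_apply]
    have h1 : |(∑ j, w (idx j) • (T (y j) - z (idx j))) i| ≤ δ/2 := by
      rw [Finset.sum_apply]
      calc |∑ j, (w (idx j) • (T (y j) - z (idx j))) i|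
          ≤ ∑ j, |(w (idx j) • (T (y j) - z (idx j))) i| :=
            Finset.abs_sum_le_sum_abs _ _
      _ ≤ ∑ j, w (idx j) * (δ/2) := by
          apply Finset.sum_le_sum
          intro j _
          rw [Pi.smul_apply, smul_eq_mul, abs_mul, abs_of_nonneg (hw0 (idx j))]
          apply mul_le_mul_of_nonneg_left _ (hw0 (idx j))
          calc |(T (y j) - z (idx j)) i| = ‖(T (y j) - z (idx j)) i‖ :=
                (Real.norm_eq_abs _).symm
          _ ≤ ‖T (y j) - z (idx j)‖ := norm_le_pi_norm _ i
          _ ≤ δ/2 := (hTy j).le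
      _ = (∑ j, w (idx j)) * (δ/2) := by rw [← Finset.sum_mul]
      _ = δ/2 := by
          rw [(Equiv.sum_comp (Fintype.equivFin ι).symm w).trans hw1, one_mul]
    have h2 : |(q' - q) i| < δ/4 := by
      calc |(q' - q) i| = ‖(q' - q) i‖ := (Real.norm_eq_abs _).symm
      _ ≤ ‖q' - q‖ := norm_le_pi_norm _ i
      _ = dist q q' := by rw [dist_comm, dist_eq_norm]
      _ < δ/4 := hq'dist
    calc |(∑ j, w (idx j) • (T (y j) - z (idx j))) i + (q' - q) i|
        ≤ |(∑ j, w (idx j) • (T (y j) - z (idx j))) i| + |(q' - q) i| := abs_add_le _ _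
    _ < δ/2 + δ/4 := by
        exact add_lt_add_of_le_of_lt h1 h2
    _ < δ := by linarith


/-- If `X` has the Daugavet property then every nonempty relatively weakly open subset of
`B_X` has diameter exactly two. -/
theorem stmt1 {X : Type*} [NormedAddCommGroup X] [NormedSpace ℝ X] [CompleteSpace X]
    [Nontrivial X] (h : HasDaugavet X) :
    ∀ W : Set X, IsRelWeakOpenBall W → W.Nonempty → Metric.diam W = 2 := by
  intro W hW hne
  have hWsub : W ⊆ Metric.closedBall (0:X) 1 := by
    obtain ⟨U, hUopen, hWeq⟩ := hW
    rw [hWeq]; exact Set.inter_subset_right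
  have hbdd : Bornology.IsBounded W := (Metric.isBounded_closedBall).subset hWsub
  apply le_antisymm
  · apply Metric.diam_le_of_forall_dist_le (by norm_num)
    intro x hx y hy
    have hx1 := mem_closedBall_zero_iff.1 (hWsub hx)
    have hy1 := mem_closedBall_zero_iff.1 (hWsub hy)
    calc dist x y = ‖x - y‖ := dist_eq_norm _ _
    _ ≤ ‖x‖ + ‖y‖ := norm_sub_le _ _
    _ ≤ 2 := by linarith
  · obtain ⟨m, g, α, l, hα, hl, hl1, hmem⟩ := bourgain_slices W hW hne
    apply le_of_forall_pos_le_add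
    intro ε hε
    set ε' : ℝ := min ε 1 with hε'def
    have hε'pos : 0 < ε' := lt_min hε one_pos
    have hε'le1 : ε' ≤ 1 := min_le_right _ _
    have hε'leε : ε' ≤ ε := min_le_left _ _
    set η : ℝ := ε' / (6*m+6) with hηdef
    have hm6 : (0:ℝ) < 6*m+6 := by positivity
    have hηpos : 0 < η := div_pos hε'pos hm6
    have hηval : η * (6*m+6) = ε' := by
      rw [hηdef]; field_simp
    obtain ⟨x0, hx0⟩ := exists_ne (0:X)
    set xh : X := ‖x0‖⁻¹ • x0 with hxhdef
    have hxh : ‖xh‖ = 1 := by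
      rw [hxhdef, norm_smul, norm_inv, norm_norm,
        inv_mul_cancel₀ (norm_ne_zero_iff.2 hx0)]
    have h3m : (1+2) * m * η ≤ ε'/2 := by nlinarith [hηpos, Nat.cast_nonneg (α := ℝ) m]
    have hrun1 := daugavet_chain h m g α hα l hl η 2 hηpos xh
      (by rw [hxh, hl1]; norm_num)
      (by rw [hxh]; linarith)
    obtain ⟨y1, hy1slice, hb1⟩ := hrun1
    set s1 : X := ∑ j, l j • y1 j with hs1def
    have hs1W : s1 ∈ W := hmem y1 hy1slice
    have hb1' : 2 - ε'/2 ≤ ‖xh + s1‖ := by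
      rw [hxh, hl1] at hb1; linarith
    have hs1lb : 1 - ε'/2 ≤ ‖s1‖ := by
      have : ‖xh + s1‖ ≤ ‖xh‖ + ‖s1‖ := norm_add_le _ _
      rw [hxh] at this; linarith
    have hs1ub : ‖s1‖ ≤ 1 := mem_closedBall_zero_iff.1 (hWsub hs1W)
    have hεη : ε' = 6*m*η + 6*η := by nlinarith [hηval]
    have hrun2 := daugavet_chain h m g α hα l hl η 2 hηpos (-s1)
      (by rw [norm_neg, hl1]; linarith)
      (by
        rw [norm_neg]
        have : (1+2) * (m:ℝ) * η = 3*m*η := by ring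
        nlinarith [hηpos, Nat.cast_nonneg (α := ℝ) m])
    obtain ⟨y2, hy2slice, hb2⟩ := hrun2
    set s2 : X := ∑ j, l j • y2 j with hs2def
    have hs2W : s2 ∈ W := hmem y2 hy2slice
    have hb2' : ‖s1‖ + 1 - ε'/2 ≤ ‖-s1 + s2‖ := by
      rw [norm_neg, hl1] at hb2; linarith
    have hdist : 2 - ε' ≤ dist s1 s2 := by
      rw [dist_eq_norm]
      have : ‖s1 - s2‖ = ‖-s1 + s2‖ := by rw [← norm_neg (s1 - s2)]; congr 1; abel
      rw [this]; linarith
    have hdiam := Metric.dist_le_diam_of_mem hbdd hs1W hs2W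
    linarith


end
end

section
/- In the definition of the weak operator Daugavet property, the operator T may always be chosen with ‖T‖ < 1: if X has the WODP, then given x_1,…,x_n ∈ S_X, ε > 0, a slice S of B_X and x' ∈ B_X, there exist x ∈ S and a bounded linear operator T : X → X with ‖T‖ < 1, ‖T(x_i) − x_i‖ < ε for all i, and ‖T(x) − x'‖ < ε. -/
open NormedSpace Metric Set MeasureTheory

noncomputable section

/-- In the definition of the WODP the operator may be chosen with `‖T‖ < 1`. -/
theorem stmt2 {X : Type*} [NormedAddCommGroup X] [NormedSpace ℝ X] [CompleteSpace X]
    (h : HasWODP X) (n : ℕ) (xs : Fin n → X) (hxs : ∀ i, ‖xs i‖ = 1)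
    (ε : ℝ) (hε : 0 < ε) (f : StrongDual ℝ X) (α : ℝ) (hα : 0 < α)
    (x' : X) (hx' : ‖x'‖ ≤ 1) :
    ∃ x ∈ ballSlice f α, ∃ T : X →L[ℝ] X, ‖T‖ < 1 ∧
      (∀ i, ‖T (xs i) - xs i‖ < ε) ∧ ‖T x - x'‖ < ε := by
  set δ : ℝ := min (ε / 5) (1 / 2) with hδdef
  have hδpos : 0 < δ := lt_min (by linarith) (by norm_num)
  have hδle : δ ≤ ε / 5 := min_le_left _ _
  have hδhalf : δ ≤ 1 / 2 := min_le_right _ _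
  obtain ⟨x, hx, T, hT, hTi, hTx⟩ := h n xs hxs δ hδpos f α hα x' hx'
  have key : ∀ y : X, ‖y‖ ≤ 1 → ∀ y' : X, ‖y'‖ ≤ 1 → ‖T y - y'‖ < δ →
      ‖((1 + 2 * δ)⁻¹ • T) y - y'‖ < ε := by
    intro y hy y' hy' hnear
    have hTy : ‖T y‖ ≤ 1 + δ := by
      calc ‖T y‖ ≤ ‖T‖ * ‖y‖ := T.le_opNorm y
        _ ≤ (1 + δ) * 1 := by
            apply mul_le_mul hT hy (norm_nonneg y) (by positivity)
        _ = 1 + δ := by ring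
    have h2 : ‖((1 + 2 * δ)⁻¹ • T) y - T y‖ = (1 - (1 + 2 * δ)⁻¹) * ‖T y‖ := by
      have : ((1 + 2 * δ)⁻¹ • T) y - T y = ((1 + 2 * δ)⁻¹ - 1) • (T y) := by
        simp [sub_smul]
      rw [this, norm_smul, Real.norm_eq_abs]
      congr 1
      rw [abs_of_nonpos]
      · ring
      · have : (1 + 2 * δ)⁻¹ ≤ 1 := by
          rw [inv_le_one_iff₀]; right; linarith
        linarith
    have hmul : (1 + 2 * δ)⁻¹ * (1 + 2 * δ) = 1 := inv_mul_cancel₀ (by positivity)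
    have hinvnn : (0:ℝ) ≤ (1 + 2 * δ)⁻¹ := by positivity
    have h3 : 1 - (1 + 2 * δ)⁻¹ ≤ 2 * δ := by nlinarith [sq_nonneg δ]
    calc ‖((1 + 2 * δ)⁻¹ • T) y - y'‖
        ≤ ‖((1 + 2 * δ)⁻¹ • T) y - T y‖ + ‖T y - y'‖ := by
          have := norm_add_le (((1 + 2 * δ)⁻¹ • T) y - T y) (T y - y')
          simpa using this
      _ < (1 - (1 + 2 * δ)⁻¹) * ‖T y‖ + δ := by rw [h2]; linarith
      _ ≤ 2 * δ * (1 + δ) + δ := by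
          have hn : (0:ℝ) ≤ 1 - (1 + 2 * δ)⁻¹ := by nlinarith
          have := mul_le_mul h3 hTy (norm_nonneg _) (by linarith)
          linarith
      _ ≤ ε := by nlinarith
  refine ⟨x, hx, (1 + 2 * δ)⁻¹ • T, ?_, fun i => key (xs i) (le_of_eq (hxs i)) (xs i) (le_of_eq (hxs i)) (hTi i), key x hx.1 x' hx' hTx⟩
  · have h1 : ‖(1 + 2 * δ)⁻¹ • T‖ = (1 + 2 * δ)⁻¹ * ‖T‖ := by
      rw [norm_smul ((1 + 2 * δ)⁻¹) T, Real.norm_eq_abs, abs_of_pos (by positivity)]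
    rw [h1]
    have : (1 + 2 * δ)⁻¹ * ‖T‖ ≤ (1 + 2 * δ)⁻¹ * (1 + δ) := by
      apply mul_le_mul_of_nonneg_left hT (by positivity)
    calc (1 + 2 * δ)⁻¹ * ‖T‖ ≤ (1 + 2 * δ)⁻¹ * (1 + δ) := this
      _ < 1 := by
        rw [inv_mul_lt_iff₀ (by positivity)]
        linarith
end
end

section
/- A Banach space X has the Daugavet property if and only if for every x* ∈ S_{X*}, every ε > 0 and every weak-star slice S of B_{X*}, there exists y* ∈ S such that ‖y* − x*‖ > 2 − ε. -/
open NormedSpace Metric Set MeasureTheory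

noncomputable section

/-- The weak-star slice of `B_{X*}` determined by `x ∈ X` and `α > 0`. -/
def wstarSlice {X : Type*} [NormedAddCommGroup X] [NormedSpace ℝ X]
    (x : X) (α : ℝ) : Set (StrongDual ℝ X) :=
  {f | ‖f‖ ≤ 1 ∧ sSup ((fun g : StrongDual ℝ X => g x) '' Metric.closedBall (0 : StrongDual ℝ X) 1) - α < f x}

section Aux
variable {X : Type*} [NormedAddCommGroup X] [NormedSpace ℝ X]

lemma aux_apply_le (f : StrongDual ℝ X) {z : X} (hz : ‖z‖ ≤ 1) : f z ≤ ‖f‖ := by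
  calc f z ≤ ‖f z‖ := le_abs_self _
  _ ≤ ‖f‖ * ‖z‖ := f.le_opNorm z
  _ ≤ ‖f‖ * 1 := mul_le_mul_of_nonneg_left hz (norm_nonneg _)
  _ = ‖f‖ := mul_one _

lemma aux_exists_fz (f : StrongDual ℝ X) {c : ℝ} (hc : c < ‖f‖) :
    ∃ z : X, ‖z‖ ≤ 1 ∧ c < f z := by
  by_contra h
  push_neg at h
  have h0 : (0:ℝ) ≤ c := by simpa using h 0 (by simp)
  have habs : ∀ z : X, ‖z‖ ≤ 1 → ‖f z‖ ≤ c := by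
    intro z hz
    rw [Real.norm_eq_abs, abs_le]
    refine ⟨?_, h z hz⟩
    have := h (-z) (by simpa using hz)
    simp only [map_neg] at this
    linarith
  have : ‖f‖ ≤ c := by
    refine f.opNorm_le_bound h0 (fun z => ?_)
    rcases eq_or_ne z 0 with rfl | hz
    · simp
    · have hw : ‖(‖z‖⁻¹ : ℝ) • z‖ = 1 := norm_smul_inv_norm hz
      have hb := habs _ hw.le
      have hz0 : (0:ℝ) < ‖z‖ := norm_pos_iff.mpr hz
      have hfz : ‖f ((‖z‖⁻¹ : ℝ) • z)‖ = ‖z‖⁻¹ * ‖f z‖ := by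
        rw [f.map_smul, smul_eq_mul, Real.norm_eq_abs, abs_mul, abs_of_pos (inv_pos.mpr hz0),
          Real.norm_eq_abs]
      rw [hfz] at hb
      calc ‖f z‖ = ‖z‖ * (‖z‖⁻¹ * ‖f z‖) := by field_simp
      _ ≤ ‖z‖ * c := mul_le_mul_of_nonneg_left hb hz0.le
      _ = c * ‖z‖ := mul_comm _ _
  linarith

lemma aux_bdd_f (f : StrongDual ℝ X) :
    BddAbove ((fun z => f z) '' Metric.closedBall (0 : X) 1) := by
  refine ⟨‖f‖, ?_⟩
  rintro r ⟨z, hz, rfl⟩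
  simp only [mem_closedBall, dist_zero_right] at hz
  exact aux_apply_le f hz

lemma aux_sSup_f (f : StrongDual ℝ X) :
    sSup ((fun z => f z) '' Metric.closedBall (0 : X) 1) = ‖f‖ := by
  refine le_antisymm ?_ ?_
  · refine csSup_le ⟨f 0, ⟨0, by simp, rfl⟩⟩ ?_
    rintro r ⟨z, hz, rfl⟩
    simp only [mem_closedBall, dist_zero_right] at hz
    exact aux_apply_le f hz
  · refine le_of_forall_lt (fun c hc => ?_)
    obtain ⟨z, hz1, hz2⟩ := aux_exists_fz f hc
    exact lt_of_lt_of_le hz2 (le_csSup (aux_bdd_f f) ⟨z, by simpa using hz1, rfl⟩)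

lemma aux_gapply_le {g : StrongDual ℝ X} (hg : ‖g‖ ≤ 1) (x : X) : g x ≤ ‖x‖ := by
  calc g x ≤ ‖g x‖ := le_abs_self _
  _ ≤ ‖g‖ * ‖x‖ := g.le_opNorm x
  _ ≤ 1 * ‖x‖ := mul_le_mul_of_nonneg_right hg (norm_nonneg _)
  _ = ‖x‖ := one_mul _

lemma aux_exists_gx (x : X) {c : ℝ} (hc : c < ‖x‖) :
    ∃ g : StrongDual ℝ X, ‖g‖ ≤ 1 ∧ c < g x := by
  obtain ⟨g, hg1, hg2⟩ := exists_dual_vector'' ℝ x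
  exact ⟨g, hg1, by rw [hg2]; exact_mod_cast hc⟩

lemma aux_bdd_x (x : X) :
    BddAbove ((fun g : StrongDual ℝ X => g x) '' Metric.closedBall (0 : StrongDual ℝ X) 1) := by
  refine ⟨‖x‖, ?_⟩
  rintro r ⟨g, hg, rfl⟩
  simp only [mem_closedBall, dist_zero_right] at hg
  exact aux_gapply_le hg x

lemma aux_sSup_x (x : X) :
    sSup ((fun g : StrongDual ℝ X => g x) '' Metric.closedBall (0 : StrongDual ℝ X) 1) = ‖x‖ := by
  refine le_antisymm ?_ ?_
  · refine csSup_le ⟨0, ⟨0, by simp, by simp⟩⟩ ?_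
    rintro r ⟨g, hg, rfl⟩
    simp only [mem_closedBall, dist_zero_right] at hg
    exact aux_gapply_le hg x
  · refine le_of_forall_lt (fun c hc => ?_)
    obtain ⟨g, hg1, hg2⟩ := aux_exists_gx x hc
    exact lt_of_lt_of_le hg2 (le_csSup (aux_bdd_x x) ⟨g, by simpa using hg1, rfl⟩)

end Aux

/-- `X` has the Daugavet property iff for every `x* ∈ S_{X*}`, every `ε > 0` and every
weak-star slice `S` of `B_{X*}` there is `y* ∈ S` with `‖y* - x*‖ > 2 - ε`. -/
theorem stmt11 {X : Type*} [NormedAddCommGroup X] [NormedSpace ℝ X] [CompleteSpace X] :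
    HasDaugavet X ↔
      ∀ f : StrongDual ℝ X, ‖f‖ = 1 → ∀ ε : ℝ, 0 < ε → ∀ (x : X) (α : ℝ), 0 < α →
        ∃ g ∈ wstarSlice x α, 2 - ε < ‖g - f‖ := by

  constructor
  · intro H f hf ε hε x α hα
    rcases eq_or_ne x 0 with rfl | hx
    · refine ⟨-f, ⟨by rw [norm_neg, hf], ?_⟩, ?_⟩
      · rw [aux_sSup_x]
        simp only [norm_zero, map_zero]
        linarith
      · have h2 : (-f) - f = (-2 : ℝ) • f := by module
        rw [h2, norm_smul, hf]
        simp only [norm_neg]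
        norm_num
        linarith
    · have hxpos : 0 < ‖x‖ := norm_pos_iff.mpr hx
      set u : X := ‖x‖⁻¹ • x with hu
      have hun : ‖u‖ = 1 := norm_smul_inv_norm hx
      set δ : ℝ := min (min (α / ‖x‖) ε) 1 / 2 with hδdef
      have hδpos : 0 < δ := by
        have : 0 < min (min (α / ‖x‖) ε) 1 :=
          lt_min (lt_min (div_pos hα hxpos) hε) one_pos
        positivity
      have hδa : δ < α / ‖x‖ := by
        have h1 : min (min (α / ‖x‖) ε) 1 ≤ α / ‖x‖ :=
          le_trans (min_le_left _ _) (min_le_left _ _)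
        have h2 : 0 < α / ‖x‖ := div_pos hα hxpos
        rw [hδdef]; linarith
      have hδα : δ * ‖x‖ < α := by
        rw [← lt_div_iff₀ hxpos]; exact hδa
      have hδε : 2 * δ ≤ ε := by
        have : min (min (α / ‖x‖) ε) 1 ≤ ε := le_trans (min_le_left _ _) (min_le_right _ _)
        rw [hδdef]; linarith
      have hδ1 : δ ≤ 1 / 2 := by
        have : min (min (α / ‖x‖) ε) 1 ≤ 1 := min_le_right _ _
        rw [hδdef]; linarith
      obtain ⟨y, ⟨hy1, hy2⟩, hxy⟩ := H u hun δ hδpos (-f) δ hδpos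
      rw [aux_sSup_f, norm_neg, hf] at hy2
      simp only [ContinuousLinearMap.neg_apply] at hy2
      have huy : u + y ≠ 0 := by
        intro h0
        rw [h0, norm_zero] at hxy
        linarith
      obtain ⟨g, hg1, hg2⟩ := exists_dual_vector ℝ (u + y) (norm_ne_zero_iff.mpr huy)
      have hg2' : g (u + y) = ‖u + y‖ := by exact_mod_cast hg2
      have hsum : 2 - δ < g u + g y := by
        rw [← map_add, hg2']; exact hxy
      have hgu : 1 - δ < g u := by
        linarith [le_trans (aux_gapply_le hg1.le y) hy1]
      have hgy : 1 - δ < g y := by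
        have := aux_gapply_le hg1.le u
        rw [hun] at this
        linarith
      refine ⟨g, ⟨hg1.le, ?_⟩, ?_⟩
      · rw [aux_sSup_x]
        have hgux : g u = ‖x‖⁻¹ * g x := by
          rw [hu, g.map_smul, smul_eq_mul]
        calc ‖x‖ - α < ‖x‖ - δ * ‖x‖ := by linarith
        _ = ‖x‖ * (1 - δ) := by ring
        _ < ‖x‖ * g u := mul_lt_mul_of_pos_left hgu hxpos
        _ = g x := by rw [hgux]; field_simp
      · have h1 : (g - f) y ≤ ‖g - f‖ := aux_apply_le (g - f) hy1
        have h2 : (g - f) y = g y - f y := by simp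
        linarith
  · intro H x hx ε hε f α hα
    rcases eq_or_ne f 0 with rfl | hf
    · refine ⟨x, ⟨hx.le, ?_⟩, ?_⟩
      · rw [aux_sSup_f]
        simp only [norm_zero, ContinuousLinearMap.zero_apply]
        linarith
      · have h2 : x + x = (2 : ℝ) • x := by module
        rw [h2, norm_smul, hx]
        norm_num
        linarith
    · have hfpos : 0 < ‖f‖ := norm_pos_iff.mpr hf
      set F : StrongDual ℝ X := ‖f‖⁻¹ • f with hF
      have hFn : ‖F‖ = 1 := norm_smul_inv_norm hf
      set δ : ℝ := min (α / ‖f‖) ε / 2 with hδdef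
      have hδpos : 0 < δ := by
        have : 0 < min (α / ‖f‖) ε := lt_min (div_pos hα hfpos) hε
        positivity
      have hδa : δ < α / ‖f‖ := by
        have h1 : min (α / ‖f‖) ε ≤ α / ‖f‖ := min_le_left _ _
        have h2 : 0 < α / ‖f‖ := div_pos hα hfpos
        rw [hδdef]; linarith
      have hδα : δ * ‖f‖ < α := by rw [← lt_div_iff₀ hfpos]; exact hδa
      have hδε : 2 * δ ≤ ε := by
        have : min (α / ‖f‖) ε ≤ ε := min_le_right _ _
        rw [hδdef]; linarith
      obtain ⟨g, ⟨hg1, hg2⟩, hgF⟩ := H (-F) (by rw [norm_neg, hFn]) δ hδpos x δ hδpos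
      rw [aux_sSup_x, hx] at hg2
      rw [sub_neg_eq_add] at hgF
      obtain ⟨y, hy1, hy2⟩ := aux_exists_fz (g + F) hgF
      simp only [ContinuousLinearMap.add_apply] at hy2
      have hgyle : g y ≤ 1 := le_trans (aux_gapply_le hg1 y) hy1
      have hFyle : F y ≤ 1 := by
        have := aux_apply_le F hy1
        rw [hFn] at this; exact this
      have hFy : 1 - δ < F y := by linarith
      have hgy : 1 - δ < g y := by linarith
      refine ⟨y, ⟨hy1, ?_⟩, ?_⟩
      · rw [aux_sSup_f]
        have hFyf : F y = ‖f‖⁻¹ * f y := by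
          rw [hF]; simp [smul_eq_mul]
        calc ‖f‖ - α < ‖f‖ - δ * ‖f‖ := by linarith
        _ = ‖f‖ * (1 - δ) := by ring
        _ < ‖f‖ * F y := mul_lt_mul_of_pos_left hFy hfpos
        _ = f y := by rw [hFyf]; field_simp
      · have h1 : g (x + y) ≤ ‖x + y‖ := aux_gapply_le hg1 (x + y)
        have h2 : g (x + y) = g x + g y := map_add g x y
        linarith

end
end

section
/- If a Banach space X has the WODP, then X has the Daugavet property. -/
open NormedSpace Metric Set MeasureTheory

noncomputable section

/-- The WODP implies the Daugavet property. -/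
theorem stmt15 {X : Type*} [NormedAddCommGroup X] [NormedSpace ℝ X] [CompleteSpace X]
    (h : HasWODP X) : HasDaugavet X := by
  intro x hx ε hε f α hα
  set δ : ℝ := min ε 1 / 8 with hδdef
  have hδpos : 0 < δ := by positivity
  have hδε : 8 * δ ≤ ε := by
    have := min_le_left ε 1; simp only [hδdef]; linarith
  have hδ1 : 8 * δ ≤ 1 := by
    have := min_le_right ε 1; simp only [hδdef]; linarith
  obtain ⟨y, hyS, T, hT, hTi, hTy⟩ :=
    h 1 ![x] (fun i => by fin_cases i <;> simpa using hx) δ hδpos f α hα x hx.le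
  refine ⟨y, hyS, ?_⟩
  have hTx : ‖T x - x‖ < δ := by simpa using hTi 0
  have h2 : ‖T (x + y)‖ > 2 - 2 * δ := by
    have : T (x + y) = (T x - x) + (T y - x) + (x + x) := by
      rw [map_add]; abel
    rw [this]
    have h3 : ‖x + x‖ = 2 := by
      rw [show x + x = (2 : ℝ) • x by module, norm_smul, hx]; norm_num
    have h4 : ‖(T x - x) + (T y - x)‖ ≤ ‖T x - x‖ + ‖T y - x‖ := norm_add_le _ _
    have h5 : x + x = ((T x - x) + (T y - x) + (x + x)) - ((T x - x) + (T y - x)) := by abel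
    have := norm_sub_le ((T x - x) + (T y - x) + (x + x)) ((T x - x) + (T y - x))
    rw [← h5, h3] at this
    linarith
  have h6 : ‖T (x + y)‖ ≤ (1 + δ) * ‖x + y‖ := by
    calc ‖T (x + y)‖ ≤ ‖T‖ * ‖x + y‖ := T.le_opNorm _
      _ ≤ (1 + δ) * ‖x + y‖ := by
          apply mul_le_mul_of_nonneg_right hT (norm_nonneg _)
  nlinarith [norm_nonneg (x + y)]
end
end

section
/- Let X be a Banach space with the Daugavet property, let W_1, W_2 be nonempty relatively weakly open subsets of B_X and ε > 0. Then there exist x ∈ W_1 and y ∈ W_2 with ‖x − y‖ > 2 − ε; in particular every nonempty relatively weakly open subset of B_X, and every convex combination of slices of B_X, has diameter two. -/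
open NormedSpace Metric Set MeasureTheory

noncomputable section

/- ------------------------------------------------------------------------ -/
/- Auxiliary machinery for the proof of `stmt17`.                            -/
/- ------------------------------------------------------------------------ -/

open scoped InnerProductSpace

section DaugavetAux

variable {X : Type*} [NormedAddCommGroup X] [NormedSpace ℝ X]

lemma dual_apply_le (g : StrongDual ℝ X) (v : X) : g v ≤ ‖g‖ * ‖v‖ :=
  (le_abs_self _).trans ((Real.norm_eq_abs _) ▸ g.le_opNorm v)

lemma combo_norm_le {m : ℕ} {lam : Fin m → ℝ} {w : Fin m → X}
    (h0 : ∀ j, 0 ≤ lam j) (h1 : (∑ j, lam j) = 1) (hw : ∀ j, ‖w j‖ ≤ 1) :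
    ‖∑ j, lam j • w j‖ ≤ 1 := by
  calc ‖∑ j, lam j • w j‖ ≤ ∑ j, ‖lam j • w j‖ := norm_sum_le _ _
    _ ≤ ∑ j, lam j := Finset.sum_le_sum (fun j _ => by
        rw [norm_smul, Real.norm_eq_abs, abs_of_nonneg (h0 j)]
        exact mul_le_of_le_one_right (h0 j) (hw j))
    _ = 1 := h1

/-- The key iterative lemma: given a finite family of slices and weights, one can pick a point
in each slice so that the weighted sum nearly norms together with any prescribed vector. -/
lemma daugavet_iterate (h : HasDaugavet X) {δ : ℝ} (hδ0 : 0 < δ) (hδ1 : δ < 1) :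
    ∀ (n : ℕ) (lam : Fin n → ℝ), (∀ i, 0 ≤ lam i) →
    ∀ (f : Fin n → StrongDual ℝ X) (α : Fin n → ℝ), (∀ i, 0 < α i) →
    ∀ z : X, z ≠ 0 →
    ∃ w : Fin n → X, (∀ i, w i ∈ ballSlice (f i) (α i)) ∧
      (‖z‖ + ∑ i, lam i) * (1 - δ) ^ n ≤ ‖z + ∑ i, lam i • w i‖ := by
  intro n
  induction n with
  | zero =>
      intro lam _ f α _ z _
      exact ⟨fun i => i.elim0, fun i => i.elim0, by simp⟩
  | succ n ih =>
      intro lam hlam f α hα z hz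
      have hz0 : (0:ℝ) < ‖z‖ := norm_pos_iff.2 hz
      set ζ := ‖z‖⁻¹ • z with hζdef
      have hζ : ‖ζ‖ = 1 := by
        rw [hζdef, norm_smul, Real.norm_eq_abs, abs_of_nonneg (inv_nonneg.2 hz0.le),
          inv_mul_cancel₀ hz0.ne']
      obtain ⟨y₀, hy₀s, hy₀⟩ := h ζ hζ δ hδ0 (f 0) (α 0) (hα 0)
      have hy₀n : ‖y₀‖ ≤ 1 := hy₀s.1
      have hzy : ζ + y₀ ≠ 0 := by
        intro h0
        rw [h0, norm_zero] at hy₀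
        linarith
      obtain ⟨g, hg1, hgeq⟩ := exists_dual_vector ℝ (ζ + y₀) (norm_ne_zero_iff.2 hzy)
      have hgeq' : g (ζ + y₀) = ‖ζ + y₀‖ := by exact_mod_cast hgeq
      have hgle : ∀ v : X, g v ≤ ‖v‖ := fun v => by
        have := dual_apply_le g v
        rwa [hg1, one_mul] at this
      have hgζ1 : g ζ ≤ 1 := (hgle ζ).trans_eq hζ
      have hgy1 : g y₀ ≤ 1 := (hgle y₀).trans hy₀n
      have hsum : (2:ℝ) - δ < g ζ + g y₀ := by
        have hadd : g (ζ + y₀) = g ζ + g y₀ := map_add g ζ y₀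
        rw [hadd] at hgeq'
        linarith [hy₀, hgeq'.ge.trans_eq rfl, hgeq'.symm ▸ hy₀]
      have hgζ : 1 - δ < g ζ := by linarith
      have hgy : 1 - δ < g y₀ := by linarith
      have hgz : g z = ‖z‖ * g ζ := by
        have hzζ : ‖z‖ • ζ = z := smul_inv_smul₀ hz0.ne' z
        calc g z = g (‖z‖ • ζ) := by rw [hzζ]
          _ = ‖z‖ * g ζ := by rw [_root_.map_smul, smul_eq_mul]
      set z' := z + lam 0 • y₀ with hz'def
      have hz'lb : (‖z‖ + lam 0) * (1 - δ) ≤ ‖z'‖ := by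
        have h1 : g z' = g z + lam 0 * g y₀ := by
          rw [hz'def, map_add, _root_.map_smul, smul_eq_mul]
        have h2 : (‖z‖ + lam 0) * (1 - δ) ≤ g z' := by
          rw [h1, hgz]
          nlinarith [hlam 0, hgζ, hgy, hz0]
        exact h2.trans (hgle z')
      have hz'pos : (0:ℝ) < ‖z'‖ :=
        lt_of_lt_of_le (by nlinarith [hlam 0]) hz'lb
      have hz'0 : z' ≠ 0 := norm_pos_iff.1 hz'pos
      obtain ⟨w', hw's, hw'⟩ := ih (Fin.tail lam) (fun i => hlam i.succ)
        (Fin.tail f) (Fin.tail α) (fun i => hα i.succ) z' hz'0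
      refine ⟨Fin.cons y₀ w', ?_, ?_⟩
      · intro i
        refine Fin.cases ?_ ?_ i
        · simpa using hy₀s
        · intro j
          simpa [Fin.tail] using hw's j
      · have hsum1 : (∑ i : Fin (n+1), lam i • (Fin.cons y₀ w' : Fin (n+1) → X) i)
            = lam 0 • y₀ + ∑ i : Fin n, Fin.tail lam i • w' i := by
          rw [Fin.sum_univ_succ]
          simp [Fin.tail]
        have hsum2 : (∑ i : Fin (n+1), lam i) = lam 0 + ∑ i : Fin n, Fin.tail lam i := by
          rw [Fin.sum_univ_succ]
          rfl
        have htail0 : 0 ≤ ∑ i : Fin n, Fin.tail lam i :=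
          Finset.sum_nonneg fun i _ => hlam i.succ
        have hpow : (0:ℝ) ≤ (1-δ)^n := pow_nonneg (by linarith) n
        calc (‖z‖ + ∑ i : Fin (n+1), lam i) * (1-δ)^(n+1)
            = ((‖z‖ + lam 0) * (1-δ) + (∑ i : Fin n, Fin.tail lam i) * (1-δ)) * (1-δ)^n := by
              rw [hsum2]; ring
          _ ≤ ((‖z‖ + lam 0) * (1-δ) + ∑ i : Fin n, Fin.tail lam i) * (1-δ)^n := by
              have hmul : (∑ i : Fin n, Fin.tail lam i) * (1-δ) ≤ ∑ i : Fin n, Fin.tail lam i :=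
                mul_le_of_le_one_right htail0 (by linarith)
              apply mul_le_mul_of_nonneg_right _ hpow
              linarith
          _ ≤ (‖z'‖ + ∑ i : Fin n, Fin.tail lam i) * (1-δ)^n := by
              apply mul_le_mul_of_nonneg_right _ hpow
              linarith [hz'lb]
          _ ≤ ‖z' + ∑ i : Fin n, Fin.tail lam i • w' i‖ := hw'
          _ = ‖z + ∑ i : Fin (n+1), lam i • (Fin.cons y₀ w' : Fin (n+1) → X) i‖ := by
              rw [hsum1, hz'def, add_assoc]

/-- Quantitative version: for unit `x` and weights summing to `1`, points of the slices can be
chosen so that `‖x + ∑ λᵢ wᵢ‖ > 2 - ε`. -/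
lemma daugavet_combo (h : HasDaugavet X) {m : ℕ} {lam : Fin m → ℝ} {g : Fin m → StrongDual ℝ X}
    {β : Fin m → ℝ} (h0 : ∀ j, 0 ≤ lam j) (h1 : (∑ j, lam j) = 1) (hβ : ∀ j, 0 < β j)
    {x : X} (hx : ‖x‖ = 1) {ε : ℝ} (hε : 0 < ε) :
    ∃ w : Fin m → X, (∀ j, w j ∈ ballSlice (g j) (β j)) ∧
      2 - ε < ‖x + ∑ j, lam j • w j‖ := by
  have hm2 : (0:ℝ) < 2 * m + 2 := by positivity
  set δ : ℝ := min (ε / (2 * m + 2)) (1/2) with hδdef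
  have hδ0 : 0 < δ := lt_min (by positivity) (by norm_num)
  have hδ1 : δ < 1 := (min_le_right _ _).trans_lt (by norm_num)
  have hx0 : x ≠ 0 := by
    intro h'
    rw [h', norm_zero] at hx
    norm_num at hx
  obtain ⟨w, hws, hw⟩ := daugavet_iterate h hδ0 hδ1 m lam h0 g β hβ x hx0
  refine ⟨w, hws, ?_⟩
  rw [hx, h1] at hw
  have hbern : 1 + (m:ℝ) * (-δ) ≤ (1 + (-δ))^m := one_add_mul_le_pow (by linarith) m
  have hbern' : 1 - (m:ℝ) * δ ≤ (1 - δ)^m := by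
    have : ((1:ℝ) - δ)^m = (1 + (-δ))^m := by ring_nf
    rw [this]
    linarith
  have hδε : (m:ℝ) * δ < ε / 2 := by
    have hδle : δ ≤ ε / (2*m+2) := min_le_left _ _
    have h2 : (m:ℝ) * δ ≤ (m:ℝ) * (ε / (2*m+2)) :=
      mul_le_mul_of_nonneg_left hδle (Nat.cast_nonneg m)
    have h3 : (m:ℝ) * (ε/(2*m+2)) < ε/2 := by
      rw [mul_div_assoc'] at *
      rw [div_lt_div_iff₀ hm2 (by norm_num : (0:ℝ) < 2)]
      nlinarith [Nat.cast_nonneg (α := ℝ) m, hε]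
    linarith
  have hfinal : (2:ℝ) - ε < (1+1) * (1-δ)^m := by nlinarith [hbern', hδε, hδ0]
  linarith [hw]

end DaugavetAux

section EuclidAux

variable {E : Type*} [NormedAddCommGroup E] [InnerProductSpace ℝ E] [CompleteSpace E]

/-- The set of "farthest points" of `K`: points realising the maximal distance to some point. -/
def farPoints (K : Set E) : Set E := {m | m ∈ K ∧ ∃ c : E, ∀ y ∈ K, ‖y - c‖ ≤ ‖m - c‖}

/-- Every compact set is contained in the closed convex hull of its farthest points. -/
lemma subset_closure_convexHull_farPoints {K : Set E} (hK : IsCompact K) :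
    K ⊆ closure (convexHull ℝ (farPoints K)) := by
  intro q hqK
  by_contra hq
  obtain ⟨φ, u, hL, hQ⟩ := geometric_hahn_banach_closed_point
    ((convex_convexHull ℝ _).closure) isClosed_closure hq
  set w := (InnerProductSpace.toDual ℝ E).symm φ with hwdef
  have hw : ∀ y : E, ⟪w, y⟫_ℝ = φ y := fun y => InnerProductSpace.toDual_symm_apply
  obtain ⟨R, hR⟩ := hK.isBounded.subset_closedBall q
  set γ := φ q - u with hγdef
  have hγ : 0 < γ := by simp only [hγdef]; linarith
  set t := (R^2 + 1) / (2*γ) with htdef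
  have ht : 0 < t := by positivity
  set c := q - t • w with hcdef
  obtain ⟨m, hmK, hmax⟩ := hK.exists_isMaxOn ⟨q, hqK⟩
    ((continuous_id.sub continuous_const).norm.continuousOn (s := K))
  have hmax' : ∀ y ∈ K, ‖y - c‖ ≤ ‖m - c‖ := fun y hy => hmax hy
  have hmFP : m ∈ farPoints K := ⟨hmK, c, hmax'⟩
  have hφm : φ m < u := hL _ (subset_closure (subset_convexHull ℝ _ hmFP))
  have hmq : ‖m - q‖ ≤ R := by
    have := hR hmK
    rwa [Metric.mem_closedBall, dist_eq_norm] at this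
  have key : ‖m - c‖^2 = ‖m - q‖^2 + 2 * (t * (φ m - φ q)) + t^2 * ‖w‖^2 := by
    have hmc : m - c = (m - q) + t • w := by rw [hcdef]; abel
    have hin : ⟪m - q, t • w⟫_ℝ = t * (φ m - φ q) := by
      rw [real_inner_smul_right, real_inner_comm, hw, map_sub]
    rw [hmc, norm_add_sq_real, hin, norm_smul, Real.norm_eq_abs, abs_of_pos ht, mul_pow]
  have hqc : ‖q - c‖^2 = t^2 * ‖w‖^2 := by
    have : q - c = t • w := by rw [hcdef]; abel
    rw [this, norm_smul, Real.norm_eq_abs, abs_of_pos ht, mul_pow]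
  have hcontr : ‖q - c‖ ≤ ‖m - c‖ := hmax' q hqK
  have hsq : ‖q - c‖^2 ≤ ‖m - c‖^2 := by
    nlinarith [norm_nonneg (q - c), norm_nonneg (m - c)]
  have htγ : 2 * (t * γ) = R^2 + 1 := by
    rw [htdef]
    field_simp
  nlinarith [hmq, norm_nonneg (m - q), hφm, hγ, ht, key, hqc, hsq, htγ]

/-- Bourgain-type lemma in a Euclidean space: near every point of a compact set `K` one can find
a convex combination of "slices" of `K`. -/
lemma euclid_combo_slices {K : Set E} (hK : IsCompact K) {p : E} (hp : p ∈ K) {δ : ℝ}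
    (hδ : 0 < δ) :
    ∃ (m : ℕ) (lam : Fin m → ℝ) (v : Fin m → E) (M : Fin m → E) (β : Fin m → ℝ),
      (∀ j, 0 ≤ lam j) ∧ (∑ j, lam j) = 1 ∧ (∀ j, 0 < β j) ∧
      (∀ j, M j ∈ K) ∧ (∀ j, ∀ q ∈ K, ⟪v j, q⟫_ℝ ≤ ⟪v j, M j⟫_ℝ) ∧
      (∀ q : Fin m → E, (∀ j, q j ∈ K) →
        (∀ j, ⟪v j, M j⟫_ℝ - β j < ⟪v j, q j⟫_ℝ) →
        ‖(∑ j, lam j • q j) - p‖ < δ) := by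
  classical
  have hp' := subset_closure_convexHull_farPoints hK hp
  obtain ⟨p', hp'mem, hpp'⟩ := Metric.mem_closure_iff.1 hp' (δ/2) (half_pos hδ)
  rw [convexHull_eq] at hp'mem
  obtain ⟨ι, s, wt, zt, hw0, hw1, hzFP, hcm⟩ := hp'mem
  rw [Finset.centerMass_eq_of_sum_1 _ _ hw1] at hcm
  set m := Fintype.card {x // x ∈ s} with hmdef
  set eqv : {x // x ∈ s} ≃ Fin m := Fintype.equivFin _ with heqv
  set lam : Fin m → ℝ := fun j => wt ((eqv.symm j) : ι) with hlamdef
  set pt : Fin m → E := fun j => zt ((eqv.symm j) : ι) with hptdef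
  have hreindex : ∀ (F : ι → E), (∑ j : Fin m, F ((eqv.symm j) : ι)) = ∑ i ∈ s, F i := by
    intro F
    rw [Equiv.sum_comp eqv.symm (fun x : {x // x ∈ s} => F (x : ι)), Finset.sum_coe_sort]
  have hreindexR : ∀ (F : ι → ℝ), (∑ j : Fin m, F ((eqv.symm j) : ι)) = ∑ i ∈ s, F i := by
    intro F
    rw [Equiv.sum_comp eqv.symm (fun x : {x // x ∈ s} => F (x : ι)), Finset.sum_coe_sort]
  have hlamsum : (∑ j : Fin m, lam j) = 1 := by
    rw [hlamdef]
    rw [hreindexR wt]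
    exact hw1
  have hptsum : (∑ j : Fin m, lam j • pt j) = p' := by
    rw [hlamdef, hptdef]
    rw [hreindex (fun i => wt i • zt i)] at *
    · exact hcm
  have hptFP : ∀ j, pt j ∈ farPoints K := fun j => hzFP _ (eqv.symm j).2
  set cc : Fin m → E := fun j => (hptFP j).2.choose with hccdef
  have hcc : ∀ j, ∀ y ∈ K, ‖y - cc j‖ ≤ ‖pt j - cc j‖ := fun j => (hptFP j).2.choose_spec
  refine ⟨m, lam, fun j => pt j - cc j, pt, fun _ => δ^2/8,
    fun j => hw0 _ (eqv.symm j).2, hlamsum, fun _ => by positivity,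
    fun j => (hptFP j).1, ?_, ?_⟩
  · intro j q hq
    have h1 : ⟪pt j - cc j, q - pt j⟫_ℝ ≤ 0 := by
      have e1 : ⟪pt j - cc j, q - pt j⟫_ℝ
          = ⟪pt j - cc j, q - cc j⟫_ℝ - ⟪pt j - cc j, pt j - cc j⟫_ℝ := by
        rw [← inner_sub_right]
        congr 1
        abel
      rw [e1, real_inner_self_eq_norm_sq]
      have h2 := real_inner_le_norm (pt j - cc j) (q - cc j)
      nlinarith [hcc j q hq, norm_nonneg (pt j - cc j)]
    have h3 : ⟪pt j - cc j, q⟫_ℝ - ⟪pt j - cc j, pt j⟫_ℝ = ⟪pt j - cc j, q - pt j⟫_ℝ := by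
      rw [inner_sub_right]
    linarith
  · intro q hqK hslice
    have hnear : ∀ j, ‖q j - pt j‖ < δ/2 := by
      intro j
      have hle : ‖q j - cc j‖ ≤ ‖pt j - cc j‖ := hcc j _ (hqK j)
      have hsqlt : ‖q j - pt j‖^2 < (δ/2)^2 := by
        have e1 : q j - pt j = (q j - cc j) - (pt j - cc j) := by abel
        rw [e1, norm_sub_sq_real]
        have e2 : ⟪q j - cc j, pt j - cc j⟫_ℝ
            = ⟪pt j - cc j, q j⟫_ℝ - ⟪pt j - cc j, cc j⟫_ℝ := by
          rw [real_inner_comm, inner_sub_right]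
        have e3 : ⟪pt j - cc j, pt j⟫_ℝ - ⟪pt j - cc j, cc j⟫_ℝ = ‖pt j - cc j‖^2 := by
          rw [← inner_sub_right, real_inner_self_eq_norm_sq]
        have h4 := hslice j
        nlinarith [hle, norm_nonneg (q j - cc j), norm_nonneg (pt j - cc j)]
      exact lt_of_pow_lt_pow_left₀ 2 (by positivity) hsqlt
    have hdecomp : (∑ j, lam j • q j) - p = (∑ j, lam j • (q j - pt j)) + (p' - p) := by
      have hd : (∑ j, lam j • (q j - pt j))
          = (∑ j, lam j • q j) - ∑ j, lam j • pt j := by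
        simp only [smul_sub]
        exact Finset.sum_sub_distrib _ _
      rw [hd, hptsum]
      abel
    have hlam0 : ∀ j, 0 ≤ lam j := fun j => hw0 _ (eqv.symm j).2
    calc ‖(∑ j, lam j • q j) - p‖
        ≤ ‖∑ j, lam j • (q j - pt j)‖ + ‖p' - p‖ := by rw [hdecomp]; exact norm_add_le _ _
      _ ≤ (∑ j, lam j * (δ/2)) + ‖p' - p‖ := by
          gcongr
          refine (norm_sum_le _ _).trans (Finset.sum_le_sum fun j _ => ?_)
          rw [norm_smul, Real.norm_eq_abs, abs_of_nonneg (hlam0 j)]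
          exact mul_le_mul_of_nonneg_left (hnear j).le (hlam0 j)
      _ < (∑ j, lam j * (δ/2)) + δ/2 := by
          have : ‖p' - p‖ < δ/2 := by
            rw [← dist_eq_norm, dist_comm]
            exact hpp'
          linarith
      _ = δ := by
          rw [← Finset.sum_mul, hlamsum]
          ring

lemma euclid_coord_abs_le_norm {n : ℕ} (a : EuclideanSpace ℝ (Fin n)) (i : Fin n) :
    |a i| ≤ ‖a‖ := by
  have h1 : (a i)^2 ≤ ∑ j, ‖a j‖^2 := by
    have := Finset.single_le_sum (f := fun j => ‖a j‖^2) (fun j _ => sq_nonneg _)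
      (Finset.mem_univ i)
    simpa [Real.norm_eq_abs, sq_abs] using this
  calc |a i| = Real.sqrt ((a i)^2) := (Real.sqrt_sq_eq_abs _).symm
    _ ≤ Real.sqrt (∑ j, ‖a j‖^2) := Real.sqrt_le_sqrt h1
    _ = ‖a‖ := (EuclideanSpace.norm_eq a).symm

end EuclidAux

section BourgainAux

variable {X : Type*} [NormedAddCommGroup X] [NormedSpace ℝ X]

/-- Bourgain's lemma, in the form we need: every basic relatively weakly open neighbourhood of a
point of `B_X` contains a convex combination of slices of `B_X`. -/
lemma weak_nbhd_contains_combo_slices {n : ℕ} (f : Fin n → StrongDual ℝ X) {u : X} (hu : ‖u‖ ≤ 1)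
    {δ : ℝ} (hδ : 0 < δ) :
    ∃ (m : ℕ) (lam : Fin m → ℝ) (g : Fin m → StrongDual ℝ X) (β : Fin m → ℝ),
      (∀ j, 0 ≤ lam j) ∧ (∑ j, lam j) = 1 ∧ (∀ j, 0 < β j) ∧
      ∀ w : Fin m → X, (∀ j, w j ∈ ballSlice (g j) (β j)) →
        ∀ i, |f i ((∑ j, lam j • w j) - u)| < δ := by
  classical
  set F : X →L[ℝ] EuclideanSpace ℝ (Fin n) :=
    ((EuclideanSpace.equiv (Fin n) ℝ).symm :
        (Fin n → ℝ) →L[ℝ] EuclideanSpace ℝ (Fin n)).comp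
      (ContinuousLinearMap.pi fun i => f i) with hFdef
  have hFapp : ∀ (x : X) (i : Fin n), F x i = f i x := fun x i => rfl
  set S := F '' Metric.closedBall (0:X) 1 with hSdef
  set K := closure S with hKdef
  have hKc : IsCompact K :=
    (F.lipschitz.isBounded_image Metric.isBounded_closedBall).isCompact_closure
  have hpS : F u ∈ S := ⟨u, mem_closedBall_zero_iff.2 hu, rfl⟩
  obtain ⟨m, lam, v, M, β, h0, h1, hβ, hMK, hsup, hfin⟩ :=
    euclid_combo_slices hKc (subset_closure hpS) hδ
  set g : Fin m → StrongDual ℝ X := fun j => (innerSL ℝ (v j)).comp F with hgdef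
  have hg : ∀ (j : Fin m) (x : X), g j x = ⟪v j, F x⟫_ℝ := fun j x => rfl
  refine ⟨m, lam, g, β, h0, h1, hβ, ?_⟩
  intro w hws i
  have hKq : ∀ j, F (w j) ∈ K :=
    fun j => subset_closure ⟨w j, mem_closedBall_zero_iff.2 (hws j).1, rfl⟩
  have hsb : ∀ j, ⟪v j, M j⟫_ℝ - β j < ⟪v j, F (w j)⟫_ℝ := by
    intro j
    have hbdd : BddAbove ((fun z => g j z) '' Metric.closedBall (0:X) 1) := by
      refine ⟨‖g j‖, ?_⟩
      rintro r ⟨x, hx, rfl⟩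
      have hx1 : ‖x‖ ≤ 1 := mem_closedBall_zero_iff.1 hx
      exact (dual_apply_le (g j) x).trans
        (mul_le_of_le_one_right (norm_nonneg _) hx1)
    have hMle : ⟪v j, M j⟫_ℝ
        ≤ sSup ((fun z => g j z) '' Metric.closedBall (0:X) 1) := by
      have hsub : K ⊆ {z : EuclideanSpace ℝ (Fin n) |
          ⟪v j, z⟫_ℝ ≤ sSup ((fun z => g j z) '' Metric.closedBall (0:X) 1)} := by
        apply closure_minimal
        · rintro z ⟨x, hx, rfl⟩
          exact le_csSup hbdd ⟨x, hx, rfl⟩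
        · exact isClosed_le (continuous_const.inner continuous_id) continuous_const
      exact hsub (hMK j)
    have hws2 := (hws j).2
    calc ⟪v j, M j⟫_ℝ - β j
        ≤ sSup ((fun z => g j z) '' Metric.closedBall (0:X) 1) - β j := by linarith
      _ < g j (w j) := hws2
      _ = ⟪v j, F (w j)⟫_ℝ := hg j (w j)
  have hmain := hfin (fun j => F (w j)) hKq hsb
  have hFsum : F (∑ j, lam j • w j) = ∑ j, lam j • F (w j) := by
    rw [map_sum]
    simp only [_root_.map_smul]
  have hlt : ‖F ((∑ j, lam j • w j) - u)‖ < δ := by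
    rw [map_sub, hFsum]
    exact hmain
  have hco := euclid_coord_abs_le_norm (F ((∑ j, lam j • w j) - u)) i
  rw [hFapp] at hco
  linarith

end BourgainAux

section MainAux

variable {X : Type*} [NormedAddCommGroup X] [NormedSpace ℝ X]

/-- In a Daugavet space, any nonempty relatively weakly open subset of the ball contains points
that nearly norm together with any prescribed unit vector. -/
lemma rel_weak_open_oracle (h : HasDaugavet X) {W : Set X} (hW : IsRelWeakOpenBall W)
    (hne : W.Nonempty) :
    ∀ x : X, ‖x‖ = 1 → ∀ ε : ℝ, 0 < ε → ∃ y ∈ W, ‖y‖ ≤ 1 ∧ 2 - ε < ‖x + y‖ := by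
  obtain ⟨U, hU, rfl⟩ := hW
  obtain ⟨u, huU, huB⟩ := hne
  obtain ⟨n, f, δ, hδ, hsub⟩ := hU u huU
  have hu1 : ‖u‖ ≤ 1 := mem_closedBall_zero_iff.1 huB
  obtain ⟨m, lam, g, β, h0, h1, hβ, hfar⟩ := weak_nbhd_contains_combo_slices f hu1 hδ
  intro x hx ε hε
  obtain ⟨w, hws, hw⟩ := daugavet_combo h h0 h1 hβ hx hε
  have hy1 : ‖∑ j, lam j • w j‖ ≤ 1 := combo_norm_le h0 h1 (fun j => (hws j).1)
  exact ⟨∑ j, lam j • w j, ⟨hsub (fun i => hfar w hws i), mem_closedBall_zero_iff.2 hy1⟩,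
    hy1, hw⟩

/-- From two "oracles" as above one gets two points at distance nearly `2`. -/
lemma two_far_points {A B : Set X} (x₀ : X) (hx₀ : ‖x₀‖ = 1)
    (hA : ∀ x : X, ‖x‖ = 1 → ∀ ε : ℝ, 0 < ε → ∃ y ∈ A, ‖y‖ ≤ 1 ∧ 2 - ε < ‖x + y‖)
    (hB : ∀ x : X, ‖x‖ = 1 → ∀ ε : ℝ, 0 < ε → ∃ y ∈ B, ‖y‖ ≤ 1 ∧ 2 - ε < ‖x + y‖)
    {ε : ℝ} (hε : 0 < ε) : ∃ x ∈ A, ∃ y ∈ B, 2 - ε < ‖x - y‖ := by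
  set ε' := min ε 1 with hε'def
  have hε'0 : 0 < ε' := lt_min hε one_pos
  have hε'1 : ε' ≤ 1 := min_le_right _ _
  have hε'ε : ε' ≤ ε := min_le_left _ _
  obtain ⟨x, hxA, hx1, hxfar⟩ := hA x₀ hx₀ (ε'/4) (by positivity)
  have hxlb : 1 - ε'/4 < ‖x‖ := by
    have h1 := norm_add_le x₀ x
    rw [hx₀] at h1
    linarith
  have hx0 : (0:ℝ) < ‖x‖ := by linarith
  have hxne : x ≠ 0 := norm_pos_iff.1 hx0
  set u := -(‖x‖⁻¹ • x) with hudef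
  have hu1 : ‖u‖ = 1 := by
    rw [hudef, norm_neg, norm_smul, Real.norm_eq_abs, abs_of_pos (inv_pos.2 hx0),
      inv_mul_cancel₀ hx0.ne']
  obtain ⟨y, hyB, hy1, hyfar⟩ := hB u hu1 (ε'/4) (by positivity)
  refine ⟨x, hxA, y, hyB, ?_⟩
  have hkey : ‖x - ‖x‖ • y‖ = ‖x‖ * ‖u + y‖ := by
    have h2 : ‖x‖ • (u + y) = -x + ‖x‖ • y := by
      rw [smul_add, hudef, smul_neg, smul_inv_smul₀ hx0.ne']
    have h3 : x - ‖x‖ • y = -(‖x‖ • (u + y)) := by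
      rw [h2]
      abel
    rw [h3, norm_neg, norm_smul, Real.norm_eq_abs, abs_of_pos hx0]
  have hx1' : ‖x‖ ≤ 1 := hx1
  have h3 : ‖x - ‖x‖ • y‖ ≤ ‖x - y‖ + (1 - ‖x‖) * ‖y‖ := by
    have h4 : x - ‖x‖ • y = (x - y) + (1 - ‖x‖) • y := by
      rw [sub_smul, one_smul]
      abel
    rw [h4]
    refine (norm_add_le _ _).trans ?_
    rw [norm_smul, Real.norm_eq_abs, abs_of_nonneg (by linarith : (0:ℝ) ≤ 1 - ‖x‖)]
  have h4 : ‖x‖ * (2 - ε'/4) < ‖x‖ * ‖u + y‖ := mul_lt_mul_of_pos_left hyfar hx0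
  have h5 : (1 - ‖x‖) * ‖y‖ ≤ 1 - ‖x‖ := mul_le_of_le_one_right (by linarith) hy1
  have h6 : 2 - ε' ≤ ‖x‖ * (2 - ε'/4) - (1 - ‖x‖) := by
    nlinarith [mul_nonneg (sub_nonneg.2 hxlb.le) (by linarith : (0:ℝ) ≤ 3 - ε'/4)]
  linarith [h3, hkey, h4, h5, h6, hε'ε]

lemma diam_eq_two_of_far {S : Set X} (hsub : ∀ z ∈ S, ‖z‖ ≤ 1)
    (hfar : ∀ ε : ℝ, 0 < ε → ∃ x ∈ S, ∃ y ∈ S, 2 - ε < ‖x - y‖) :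
    Metric.diam S = 2 := by
  have hb : Bornology.IsBounded S :=
    (Metric.isBounded_closedBall (x := (0:X)) (r := 1)).subset
      (fun z hz => mem_closedBall_zero_iff.2 (hsub z hz))
  apply le_antisymm
  · apply Metric.diam_le_of_forall_dist_le (by norm_num)
    intro x hx y hy
    rw [dist_eq_norm]
    calc ‖x - y‖ ≤ ‖x‖ + ‖y‖ := norm_sub_le _ _
      _ ≤ 2 := by linarith [hsub x hx, hsub y hy]
  · by_contra hlt
    push_neg at hlt
    obtain ⟨x, hx, y, hy, hxy⟩ := hfar (2 - Metric.diam S) (by linarith)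
    have hd := Metric.dist_le_diam_of_mem hb hx hy
    rw [dist_eq_norm] at hd
    linarith

lemma exists_unit_vector (X : Type*) [NormedAddCommGroup X] [NormedSpace ℝ X] [Nontrivial X] :
    ∃ x : X, ‖x‖ = 1 := by
  obtain ⟨z, hz⟩ := exists_ne (0 : X)
  have hz0 : (0:ℝ) < ‖z‖ := norm_pos_iff.2 hz
  exact ⟨‖z‖⁻¹ • z, by
    rw [norm_smul, Real.norm_eq_abs, abs_of_pos (inv_pos.2 hz0), inv_mul_cancel₀ hz0.ne']⟩

end MainAux

/-- If `X` has the Daugavet property then any two nonempty relatively weakly open subsets of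
`B_X` contain points at distance almost `2`; in particular every nonempty relatively weakly
open subset and every convex combination of slices of `B_X` has diameter two. -/
theorem stmt17 {X : Type*} [NormedAddCommGroup X] [NormedSpace ℝ X] [CompleteSpace X]
    [Nontrivial X] (h : HasDaugavet X) :
    (∀ W₁ W₂ : Set X, IsRelWeakOpenBall W₁ → IsRelWeakOpenBall W₂ →
      W₁.Nonempty → W₂.Nonempty → ∀ ε : ℝ, 0 < ε →
        ∃ x ∈ W₁, ∃ y ∈ W₂, 2 - ε < ‖x - y‖) ∧
    (∀ W : Set X, IsRelWeakOpenBall W → W.Nonempty → Metric.diam W = 2) ∧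
    (∀ (n : ℕ) (lam : Fin n → ℝ) (f : Fin n → StrongDual ℝ X) (α : Fin n → ℝ),
      (∀ i, 0 ≤ lam i ∧ lam i ≤ 1) → (∑ i, lam i) = 1 → (∀ i, 0 < α i) →
      Metric.diam {z : X | ∃ w : Fin n → X,
        (∀ i, w i ∈ ballSlice (f i) (α i)) ∧ z = ∑ i, lam i • w i} = 2) := by
  obtain ⟨x₀, hx₀⟩ := exists_unit_vector X
  have part1 : ∀ W₁ W₂ : Set X, IsRelWeakOpenBall W₁ → IsRelWeakOpenBall W₂ →
      W₁.Nonempty → W₂.Nonempty → ∀ ε : ℝ, 0 < ε →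
        ∃ x ∈ W₁, ∃ y ∈ W₂, 2 - ε < ‖x - y‖ := by
    intro W₁ W₂ h₁ h₂ hne₁ hne₂ ε hε
    exact two_far_points x₀ hx₀ (rel_weak_open_oracle h h₁ hne₁)
      (rel_weak_open_oracle h h₂ hne₂) hε
  refine ⟨part1, ?_, ?_⟩
  · intro W hW hne
    have hsub : ∀ z ∈ W, ‖z‖ ≤ 1 := by
      obtain ⟨U, _, rfl⟩ := hW
      exact fun z hz => mem_closedBall_zero_iff.1 hz.2
    exact diam_eq_two_of_far hsub (fun ε hε => part1 W W hW hW hne hne ε hε)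
  · intro n lam f α hlam hsum hα
    have h0 : ∀ i, 0 ≤ lam i := fun i => (hlam i).1
    have oracle : ∀ x : X, ‖x‖ = 1 → ∀ ε : ℝ, 0 < ε →
        ∃ y ∈ {z : X | ∃ w : Fin n → X,
          (∀ i, w i ∈ ballSlice (f i) (α i)) ∧ z = ∑ i, lam i • w i},
          ‖y‖ ≤ 1 ∧ 2 - ε < ‖x + y‖ := by
      intro x hx ε hε
      obtain ⟨w, hws, hw⟩ := daugavet_combo h h0 hsum hα hx hε
      exact ⟨_, ⟨w, hws, rfl⟩, combo_norm_le h0 hsum (fun j => (hws j).1), hw⟩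
    apply diam_eq_two_of_far
    · rintro z ⟨w, hws, rfl⟩
      exact combo_norm_le h0 hsum (fun j => (hws j).1)
    · intro ε hε
      exact two_far_points x₀ hx₀ oracle oracle hε
end
end
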